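/- Let f : ℝⁿ → ℝ be p-times continuously differentiable (p ≥ 2) with ‖∇ᵖf(x) − ∇ᵖf(y)‖ ≤ (p−1)!·L·‖x−y‖ for all x, y. Then for all x, s ∈ ℝⁿ, ‖∇f(x+s) − ∇_s T_p(x,s)‖ ≤ L·‖s‖^p, where ∇_s T_p(x,s) is the gradient with respect to s of the degree-p Taylor polynomial of f about x. -/

import Mathlib

open scoped BigOperators

variable {E : Type*} [NormedAddCommGroup E] [NormedSpace ℝ E]

/-- The flip of bilinear maps, as a continuous linear map. -/
noncomputable def flipCLM (F : Type*) [NormedAddCommGroup F] [NormedSpace ℝ F] :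
    (E →L[ℝ] E →L[ℝ] F) →L[ℝ] (E →L[ℝ] E →L[ℝ] F) :=
  (ContinuousLinearMap.flipₗᵢ ℝ E E F).toLinearIsometry.toContinuousLinearMap

lemma flipCLM_apply (F : Type*) [NormedAddCommGroup F] [NormedSpace ℝ F]
    (A : E →L[ℝ] E →L[ℝ] F) (c d : E) : flipCLM (E := E) F A c d = A d c := rfl

/-- Swapping the last two slots of an iterated derivative. -/
lemma swap_last_two {F : Type*} [NormedAddCommGroup F] [NormedSpace ℝ F]
    {j : ℕ} {g : E → F} (hg : ContDiff ℝ ((j + 1 + 1 : ℕ) : ℕ∞) g) (x : E)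
    (v : Fin j → E) (a b : E) :
    iteratedFDeriv ℝ (j + 1 + 1) g x (Fin.snoc (Fin.snoc v a) b)
      = iteratedFDeriv ℝ (j + 1 + 1) g x (Fin.snoc (Fin.snoc v b) a) := by
  set H := fderiv ℝ (fderiv ℝ g) with hH
  have peel : ∀ c d : E,
      iteratedFDeriv ℝ (j + 1 + 1) g x (Fin.snoc (Fin.snoc v c) d)
        = iteratedFDeriv ℝ j H x v c d := by
    intro c d
    rw [iteratedFDeriv_succ_apply_right]
    simp only [Fin.init_snoc, Fin.snoc_last]
    rw [iteratedFDeriv_succ_apply_right]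
    simp only [Fin.init_snoc, Fin.snoc_last]
    rfl
  rw [peel, peel]
  have hdiff : ∀ z, HasFDerivAt g (fderiv ℝ g z) z := by
    intro z
    exact (hg.differentiable (by simp)).differentiableAt.hasFDerivAt
  have hg1 : ContDiff ℝ ((j + 1 : ℕ) : ℕ∞) (fderiv ℝ g) :=
    hg.fderiv_right (by exact_mod_cast le_rfl)
  have hdiff2 : ∀ y, HasFDerivAt (fderiv ℝ g) (H y) y := by
    intro y
    exact ((hg1.differentiable (by simp)) y).hasFDerivAt
  have hsym : ∀ y c d, H y c d = H y d c := fun y c d =>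
    second_derivative_symmetric hdiff (hdiff2 y) c d
  have hsmooth : ContDiff ℝ ((j : ℕ) : ℕ∞) H :=
    hg1.fderiv_right (by exact_mod_cast le_rfl)
  have hcomp := ContinuousLinearMap.iteratedFDeriv_comp_left (𝕜 := ℝ) (f := H)
      (G := (E →L[ℝ] E →L[ℝ] F)) (flipCLM (E := E) F) (hsmooth.contDiffAt (x := x)) (i := j) le_rfl
  have hLH : ⇑(flipCLM (E := E) F) ∘ H = H := by
    funext y
    ext c d
    rw [Function.comp_apply, flipCLM_apply]
    exact hsym y d c
  rw [hLH] at hcomp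
  have hv : iteratedFDeriv ℝ j H x v = flipCLM (E := E) F (iteratedFDeriv ℝ j H x v) :=
    congrArg (fun T => T v) hcomp
  conv_lhs => rw [hv]
  exact flipCLM_apply F _ a b

universe uE uF

/-- On the diagonal, an iterated derivative slot can be moved to the last position. -/
lemma update_diag_snoc {E : Type uE} [NormedAddCommGroup E] [NormedSpace ℝ E] :
    ∀ (j : ℕ) {F : Type (max uE uF)} [NormedAddCommGroup F] [NormedSpace ℝ F]
    (g : E → F), ContDiff ℝ ((j + 1 : ℕ) : ℕ∞) g → ∀ (x s u : E) (i : Fin (j + 1)),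
    iteratedFDeriv ℝ (j + 1) g x (Function.update (fun _ => s) i u)
      = iteratedFDeriv ℝ (j + 1) g x (Fin.snoc (fun _ => s) u) := by
  intro j
  induction j with
  | zero =>
    intro F _ _ g hg x s u i
    congr 1
    funext k
    have hk : k = i := Fin.ext (by omega)
    have hk2 : k = Fin.last 0 := Fin.ext (by omega)
    rw [hk, Function.update_self, ← hk, hk2, Fin.snoc_last]
  | succ j IH =>
    intro F _ _ g hg x s u i
    rcases Fin.eq_castSucc_or_eq_last i with ⟨i', rfl⟩ | rfl
    · -- i is not the last slot
      have hlast : Function.update (fun _ : Fin (j + 1 + 1) => s) (Fin.castSucc i') u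
          (Fin.last (j + 1)) = s := by
        rw [Function.update_of_ne (Fin.castSucc_lt_last i').ne.symm]
      have hinit : Fin.init (Function.update (fun _ : Fin (j + 1 + 1) => s) (Fin.castSucc i') u)
          = Function.update (fun _ : Fin (j + 1) => s) i' u := by
        funext k
        simp only [Fin.init, Function.update_apply, Fin.castSucc_inj]
      rw [iteratedFDeriv_succ_apply_right, hinit, hlast]
      have hg' : ContDiff ℝ ((j + 1 : ℕ) : ℕ∞) (fderiv ℝ g) :=
        hg.fderiv_right (by exact_mod_cast le_rfl)
      rw [IH (fderiv ℝ g) hg' x s u i']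
      have back : iteratedFDeriv ℝ (j + 1 + 1) g x
            (Fin.snoc (Fin.snoc (fun _ : Fin j => s) u) s)
          = iteratedFDeriv ℝ (j + 1) (fun y => fderiv ℝ g y) x
            (Fin.snoc (fun _ : Fin j => s) u) s := by
        rw [iteratedFDeriv_succ_apply_right, Fin.init_snoc, Fin.snoc_last]
      rw [← back, swap_last_two hg x _ u s]
      congr 1
      funext k
      refine Fin.lastCases ?_ (fun k' => ?_) k
      · rw [Fin.snoc_last, Fin.snoc_last]
      · rw [Fin.snoc_castSucc, Fin.snoc_castSucc]
        refine Fin.lastCases ?_ (fun k'' => ?_) k'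
        · rw [Fin.snoc_last]
        · rw [Fin.snoc_castSucc]
    · -- i is the last slot
      congr 1
      funext k
      refine Fin.lastCases ?_ (fun k' => ?_) k
      · rw [Function.update_self, Fin.snoc_last]
      · rw [Function.update_of_ne (Fin.castSucc_lt_last k').ne, Fin.snoc_castSucc]

section Diag

variable {E : Type} [NormedAddCommGroup E] [NormedSpace ℝ E]

lemma hasFDerivAt_diag {F : Type} [NormedAddCommGroup F] [NormedSpace ℝ F] [CompleteSpace F]
    (k : ℕ) (g : E → F) (hg : ContDiff ℝ ((k + 1 : ℕ) : ℕ∞) g) (x s : E) :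
    HasFDerivAt (fun s' => iteratedFDeriv ℝ (k + 1) g x (fun _ => s'))
      ((k + 1 : ℕ) • (iteratedFDeriv ℝ k (fderiv ℝ g) x (fun _ => s))) s := by
  classical
  set A := iteratedFDeriv ℝ (k + 1) g x with hA
  let d : E →L[ℝ] (Fin (k + 1) → E) :=
    ContinuousLinearMap.pi (fun _ => ContinuousLinearMap.id ℝ E)
  have hcomp : HasFDerivAt (fun s' => A (fun _ => s'))
      ((A.linearDeriv (d s)).comp d) s :=
    (A.hasFDerivAt (d s)).comp s d.hasFDerivAt
  have heq : (A.linearDeriv (d s)).comp d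
      = (k + 1 : ℕ) • (iteratedFDeriv ℝ k (fderiv ℝ g) x (fun _ => s)) := by
    ext u
    rw [ContinuousLinearMap.comp_apply, ContinuousMultilinearMap.linearDeriv_apply]
    have hsum : ∀ i : Fin (k + 1), A (Function.update (d s) i (d u i))
        = iteratedFDeriv ℝ k (fderiv ℝ g) x (fun _ => s) u := by
      intro i
      have h1 : Function.update (d s) i (d u i)
          = Function.update (fun _ : Fin (k + 1) => s) i u := rfl
      rw [hA, h1, update_diag_snoc k g hg x s u i, iteratedFDeriv_succ_apply_right,
        Fin.init_snoc, Fin.snoc_last]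
    rw [Finset.sum_congr rfl (fun i _ => hsum i), Finset.sum_const, Finset.card_univ,
      Fintype.card_fin]
    rfl
  rw [heq] at hcomp
  exact hcomp

lemma hasFDerivAt_taylor_sum (p : ℕ) (f : E → ℝ) (hf : ContDiff ℝ ((p : ℕ) : ℕ∞) f) (x s : E) :
    HasFDerivAt (fun s' => ∑ j ∈ Finset.range (p + 1),
        (1 / (j.factorial : ℝ)) * iteratedFDeriv ℝ j f x (fun _ => s'))
      (∑ k ∈ Finset.range p,
        (1 / (k.factorial : ℝ)) • iteratedFDeriv ℝ k (fderiv ℝ f) x (fun _ => s)) s := by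
  set D : ℕ → (E →L[ℝ] ℝ) := fun j => Nat.rec 0
    (fun k _ => (1 / ((k + 1).factorial : ℝ)) •
      ((k + 1 : ℕ) • iteratedFDeriv ℝ k (fderiv ℝ f) x (fun _ => s))) j with hD
  have hterm : ∀ j ∈ Finset.range (p + 1), HasFDerivAt
      (fun s' => (1 / (j.factorial : ℝ)) * iteratedFDeriv ℝ j f x (fun _ => s')) (D j) s := by
    intro j hj
    match j with
    | 0 =>
      have hconst : (fun s' : E => (1 / (Nat.factorial 0 : ℝ)) *
            iteratedFDeriv ℝ 0 f x (fun _ => s'))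
          = fun _ : E => (1 / (Nat.factorial 0 : ℝ)) * iteratedFDeriv ℝ 0 f x (fun _ => x) := by
        funext s'
        congr 1
      rw [hconst]
      exact hasFDerivAt_const _ _
    | (k + 1) =>
      have hsm : ContDiff ℝ ((k + 1 : ℕ) : ℕ∞) f := hf.of_le (by
        have : (k + 1) ≤ p := by
          have := Finset.mem_range.1 hj; omega
        exact_mod_cast this)
      exact (hasFDerivAt_diag k f hsm x s).const_mul _
  have hsum := HasFDerivAt.fun_sum hterm
  have hDsum : ∑ j ∈ Finset.range (p + 1), D j
      = ∑ k ∈ Finset.range p,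
        (1 / (k.factorial : ℝ)) • iteratedFDeriv ℝ k (fderiv ℝ f) x (fun _ => s) := by
    rw [Finset.sum_range_succ']
    have hD0 : D 0 = 0 := rfl
    rw [hD0, add_zero]
    refine Finset.sum_congr rfl (fun k _ => ?_)
    have hDk : D (k + 1) = (1 / ((k + 1).factorial : ℝ)) •
        ((k + 1 : ℕ) • iteratedFDeriv ℝ k (fderiv ℝ f) x (fun _ => s)) := rfl
    rw [hDk, ← Nat.cast_smul_eq_nsmul ℝ, smul_smul]
    congr 1
    have h1 : ((k.factorial : ℝ)) ≠ 0 := Nat.cast_ne_zero.2 k.factorial_ne_zero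
    rw [Nat.factorial_succ]
    push_cast
    field_simp
  rw [hDsum] at hsum
  exact hsum

end Diag

section Key

variable {E : Type} [NormedAddCommGroup E] [NormedSpace ℝ E]

lemma taylor_key : ∀ (m : ℕ) {F : Type} [NormedAddCommGroup F] [NormedSpace ℝ F]
    (g : E → F) (M : ℝ), ContDiff ℝ ((m : ℕ) : ℕ∞) g →
    (∀ y z : E, ‖iteratedFDeriv ℝ m g y - iteratedFDeriv ℝ m g z‖ ≤ M * ‖y - z‖) →
    ∀ x s : E, ‖g (x + s) - ∑ k ∈ Finset.range (m + 1),
        (1 / (k.factorial : ℝ)) • iteratedFDeriv ℝ k g x (fun _ => s)‖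
      ≤ M * ‖s‖ ^ (m + 1) / ((m + 1).factorial : ℝ) := by
  intro m
  induction m with
  | zero =>
    intro F _ _ g M hg hlip x s
    have hnorm : ∀ y z : E, ‖g y - g z‖ ≤ M * ‖y - z‖ := by
      intro y z
      have h1 := hlip y z
      have h2 : iteratedFDeriv ℝ 0 g y - iteratedFDeriv ℝ 0 g z
          = (continuousMultilinearCurryFin0 ℝ E F).symm (g y - g z) := by
        rw [(continuousMultilinearCurryFin0 ℝ E F).symm.map_sub, iteratedFDeriv_zero_eq_comp]
        rfl
      rw [h2, LinearIsometryEquiv.norm_map] at h1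
      exact h1
    have hsum : ∑ k ∈ Finset.range (0 + 1),
        (1 / (k.factorial : ℝ)) • iteratedFDeriv ℝ k g x (fun _ => s) = g x := by
      rw [Finset.sum_range_one]
      simp [iteratedFDeriv_zero_apply]
    rw [hsum]
    have := hnorm (x + s) x
    rw [add_sub_cancel_left] at this
    simpa using this
  | succ m IH =>
    intro F _ _ g M hg hlip x s
    -- the Taylor expansion of the derivative
    set W : ℝ → (E →L[ℝ] F) := fun t => fderiv ℝ g (x + t • s)
      - ∑ k ∈ Finset.range (m + 1),
        (1 / (k.factorial : ℝ)) • iteratedFDeriv ℝ k (fderiv ℝ g) x (fun _ => t • s) with hW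
    set v : ℕ → F := fun k => iteratedFDeriv ℝ k g x (fun _ => s) with hv
    set h : ℝ → F := fun t => g (x + t • s)
      - ∑ k ∈ Finset.range (m + 1 + 1), (t ^ k * (1 / (k.factorial : ℝ))) • v k with hh
    have hg' : ContDiff ℝ ((m : ℕ) : ℕ∞) (fderiv ℝ g) :=
      hg.fderiv_right (by exact_mod_cast le_rfl)
    have hlip' : ∀ y z : E, ‖iteratedFDeriv ℝ m (fderiv ℝ g) y
        - iteratedFDeriv ℝ m (fderiv ℝ g) z‖ ≤ M * ‖y - z‖ := by
      intro y z
      set e := continuousMultilinearCurryRightEquiv' ℝ m E F with he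
      have h2 : ∀ w : E, iteratedFDeriv ℝ (m + 1) g w
          = e.symm (iteratedFDeriv ℝ m (fderiv ℝ g) w) := by
        intro w
        rw [iteratedFDeriv_succ_eq_comp_right]
        rfl
      have h3 := hlip y z
      rw [h2 y, h2 z, ← e.symm.map_sub, LinearIsometryEquiv.norm_map] at h3
      exact h3
    -- derivative of h
    have hgdiff : Differentiable ℝ g :=
      hg.differentiable (by simp)
    have hvsucc : ∀ k : ℕ, ∀ w : E,
        iteratedFDeriv ℝ k (fderiv ℝ g) x (fun _ => w) s = iteratedFDeriv ℝ (k + 1) g x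
          (Fin.snoc (fun _ : Fin k => w) s) := by
      intro k w
      rw [iteratedFDeriv_succ_apply_right, Fin.init_snoc, Fin.snoc_last]
    have hderiv : ∀ t : ℝ, HasDerivAt h (W t s) t := by
      intro t
      have hline : HasDerivAt (fun u : ℝ => x + u • s) s t := by
        simpa using ((hasDerivAt_id t).smul_const s).const_add x
      have h1 : HasDerivAt (fun u : ℝ => g (x + u • s)) (fderiv ℝ g (x + t • s) s) t :=
        (hgdiff (x + t • s)).hasFDerivAt.comp_hasDerivAt t hline
      have h2 : HasDerivAt (fun u : ℝ => ∑ k ∈ Finset.range (m + 1 + 1),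
            (u ^ k * (1 / (k.factorial : ℝ))) • v k)
          (∑ k ∈ Finset.range (m + 1 + 1),
            (((k : ℝ) * t ^ (k - 1)) * (1 / (k.factorial : ℝ))) • v k) t :=
        HasDerivAt.fun_sum (fun k _ => ((hasDerivAt_pow k t).mul_const _).smul_const (v k))
      have h12 := h1.sub h2
      have hrw : fderiv ℝ g (x + t • s) s - ∑ k ∈ Finset.range (m + 1 + 1),
          (((k : ℝ) * t ^ (k - 1)) * (1 / (k.factorial : ℝ))) • v k = W t s := by
        rw [hW, ContinuousLinearMap.sub_apply, ContinuousLinearMap.sum_apply]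
        congr 1
        rw [Finset.sum_range_succ']
        simp only [Nat.cast_zero, zero_mul, zero_smul, add_zero]
        refine Finset.sum_congr rfl (fun k _ => ?_)
        rw [ContinuousLinearMap.smul_apply]
        have hsm : iteratedFDeriv ℝ k (fderiv ℝ g) x (fun _ => t • s)
            = t ^ k • iteratedFDeriv ℝ k (fderiv ℝ g) x (fun _ => s) := by
          have h4 : (fun _ : Fin k => t • s) = fun i => t • ((fun _ : Fin k => s) i) := rfl
          rw [h4, ContinuousMultilinearMap.map_smul_univ, Finset.prod_const,
            Finset.card_univ, Fintype.card_fin]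
        rw [hsm, ContinuousLinearMap.smul_apply, hvsucc k s]
        have h5 : iteratedFDeriv ℝ (k + 1) g x (Fin.snoc (fun _ : Fin k => s) s) = v (k + 1) := by
          rw [hv]
          congr 1
          funext i
          refine Fin.lastCases ?_ (fun i' => ?_) i
          · rw [Fin.snoc_last]
          · rw [Fin.snoc_castSucc]
        rw [h5, smul_smul]
        congr 1
        have h6 : ((k.factorial : ℝ)) ≠ 0 := Nat.cast_ne_zero.2 k.factorial_ne_zero
        rw [Nat.factorial_succ]
        push_cast
        field_simp
      rw [← hrw]
      exact h12
    -- bound on the derivative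
    set C : ℝ := M * ‖s‖ ^ (m + 1 + 1) / ((m + 1).factorial : ℝ) with hC
    have hbound : ∀ t ∈ Set.Ico (0 : ℝ) 1, ‖W t s‖ ≤ C * t ^ (m + 1) := by
      intro t ht
      have hWt : ‖W t‖ ≤ M * ‖t • s‖ ^ (m + 1) / ((m + 1).factorial : ℝ) :=
        IH (fderiv ℝ g) M hg' hlip' x (t • s)
      calc ‖W t s‖ ≤ ‖W t‖ * ‖s‖ := ContinuousLinearMap.le_opNorm _ _
        _ ≤ (M * ‖t • s‖ ^ (m + 1) / ((m + 1).factorial : ℝ)) * ‖s‖ :=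
            mul_le_mul_of_nonneg_right hWt (norm_nonneg s)
        _ = C * t ^ (m + 1) := by
            rw [norm_smul, Real.norm_eq_abs, abs_of_nonneg ht.1, mul_pow, hC]
            have h6 : (((m + 1).factorial : ℝ)) ≠ 0 := Nat.cast_ne_zero.2 (m + 1).factorial_ne_zero
            field_simp
            ring
    have h0 : h 0 = 0 := by
      rw [hh]
      simp only [zero_smul, add_zero]
      have : ∑ k ∈ Finset.range (m + 1 + 1), ((0 : ℝ) ^ k * (1 / (k.factorial : ℝ))) • v k
          = v 0 := by
        rw [Finset.sum_range_succ']
        simp [zero_pow]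
      rw [this]
      have : v 0 = g x := by rw [hv]; exact iteratedFDeriv_zero_apply _
      rw [this, sub_self]
    set B : ℝ → ℝ := fun t => C * t ^ (m + 1 + 1) / (m + 1 + 1) with hB
    have hBd : ∀ t : ℝ, HasDerivAt B (C * t ^ (m + 1)) t := by
      intro t
      have : HasDerivAt (fun y : ℝ => C / (m + 1 + 1) * y ^ (m + 1 + 1))
          (C / (m + 1 + 1) * (((m + 1 + 1 : ℕ) : ℝ) * t ^ (m + 1 + 1 - 1))) t :=
        (hasDerivAt_pow (m + 1 + 1) t).const_mul (C / (m + 1 + 1))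
      convert this using 1
      · funext u
        rw [hB]
        ring
      · push_cast
        field_simp [show ((m:ℝ)+1+1) ≠ 0 by positivity]
    have himage := image_norm_le_of_norm_deriv_right_le_deriv_boundary
      (f := h) (f' := fun t => W t s) (a := 0) (b := 1)
      (fun t _ => (hderiv t).continuousAt.continuousWithinAt)
      (fun t _ => (hderiv t).hasDerivWithinAt)
      (by rw [h0]; simp [hB]) hBd hbound
    have hfin : ‖h 1‖ ≤ B 1 := himage (Set.mem_Icc.2 ⟨zero_le_one, le_rfl⟩)
    have h1eq : h 1 = g (x + s) - ∑ k ∈ Finset.range (m + 1 + 1),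
        (1 / (k.factorial : ℝ)) • v k := by
      rw [hh]
      simp [one_pow, one_mul, one_smul]
    rw [h1eq] at hfin
    have hBeq : B 1 = M * ‖s‖ ^ (m + 1 + 1) / ((m + 1 + 1).factorial : ℝ) := by
      have h6 : (((m + 1).factorial : ℝ)) ≠ 0 := Nat.cast_ne_zero.2 (m + 1).factorial_ne_zero
      have h7 : (((m + 1 + 1).factorial : ℝ)) = ((m : ℝ) + 1 + 1) * (((m + 1).factorial : ℝ)) := by
        rw [Nat.factorial_succ]
        push_cast
        ring
      have h8 : ((m : ℝ) + 1 + 1) ≠ 0 := by positivity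
      have h9 : B 1 = C / ((m : ℝ) + 1 + 1) := by
        rw [hB]
        norm_num
      rw [h9, hC, h7, div_div]
      ring
    rw [hBeq] at hfin
    exact hfin

end Key

/-- The degree-`p` Taylor polynomial of `f` at `x`, evaluated at increment `s`. -/
noncomputable def taylorP {n : ℕ} (p : ℕ) (f : EuclideanSpace ℝ (Fin n) → ℝ)
    (x s : EuclideanSpace ℝ (Fin n)) : ℝ :=
  ∑ j ∈ Finset.range (p + 1),
    (1 / (j.factorial : ℝ)) * iteratedFDeriv ℝ j f x (fun _ => s)

theorem stmt1 {n : ℕ} (p : ℕ) (hp : 2 ≤ p) (f : EuclideanSpace ℝ (Fin n) → ℝ)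
    (L : ℝ) (hL : 0 ≤ L) (hf : ContDiff ℝ (p : ℕ∞) f)
    (hLip : ∀ x y : EuclideanSpace ℝ (Fin n),
      ‖iteratedFDeriv ℝ p f x - iteratedFDeriv ℝ p f y‖ ≤ ((p - 1).factorial : ℝ) * L * ‖x - y‖) :
    ∀ x s : EuclideanSpace ℝ (Fin n),
      ‖gradient f (x + s) - gradient (fun s' => taylorP p f x s') s‖ ≤ L * ‖s‖ ^ p := by
  obtain ⟨q, rfl⟩ : ∃ q, p = q + 1 := ⟨p - 1, by omega⟩
  intro x s
  set S : EuclideanSpace ℝ (Fin n) →L[ℝ] ℝ := ∑ k ∈ Finset.range (q + 1),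
    (1 / (k.factorial : ℝ)) • iteratedFDeriv ℝ k (fderiv ℝ f) x (fun _ => s) with hS
  -- gradient of the Taylor polynomial
  have hT : HasFDerivAt (fun s' => taylorP (q + 1) f x s') S s := by
    have := hasFDerivAt_taylor_sum (q + 1) f hf x s
    exact this
  have hTg : HasGradientAt (fun s' => taylorP (q + 1) f x s')
      ((InnerProductSpace.toDual ℝ (EuclideanSpace ℝ (Fin n))).symm S) s := by
    rw [hasGradientAt_iff_hasFDerivAt]
    simpa using hT
  have hgrad1 : gradient (fun s' => taylorP (q + 1) f x s') s
      = (InnerProductSpace.toDual ℝ (EuclideanSpace ℝ (Fin n))).symm S := hTg.gradient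
  -- gradient of f
  have hfd : DifferentiableAt ℝ f (x + s) :=
    (hf.differentiable (by simp)).differentiableAt
  have hg2 : gradient f (x + s)
      = (InnerProductSpace.toDual ℝ (EuclideanSpace ℝ (Fin n))).symm (fderiv ℝ f (x + s)) := by
    have : HasGradientAt f ((InnerProductSpace.toDual ℝ (EuclideanSpace ℝ (Fin n))).symm (fderiv ℝ f (x + s))) (x + s) := by
      rw [hasGradientAt_iff_hasFDerivAt]
      simpa using hfd.hasFDerivAt
    exact this.gradient
  rw [hgrad1, hg2, ← (InnerProductSpace.toDual ℝ (EuclideanSpace ℝ (Fin n))).symm.map_sub,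
    LinearIsometryEquiv.norm_map]
  -- quantitative bound
  have hc : ContDiff ℝ ((q : ℕ) : ℕ∞) (fderiv ℝ f) := hf.fderiv_right (by exact_mod_cast le_rfl)
  have hlip' : ∀ y z : EuclideanSpace ℝ (Fin n), ‖iteratedFDeriv ℝ q (fderiv ℝ f) y
      - iteratedFDeriv ℝ q (fderiv ℝ f) z‖ ≤ ((q.factorial : ℝ) * L) * ‖y - z‖ := by
    intro y z
    set e := continuousMultilinearCurryRightEquiv' ℝ q (EuclideanSpace ℝ (Fin n)) ℝ with he
    have h2 : ∀ w : EuclideanSpace ℝ (Fin n), iteratedFDeriv ℝ (q + 1) f w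
        = e.symm (iteratedFDeriv ℝ q (fderiv ℝ f) w) := by
      intro w
      rw [iteratedFDeriv_succ_eq_comp_right]
      rfl
    have h3 := hLip y z
    rw [h2 y, h2 z, ← e.symm.map_sub, LinearIsometryEquiv.norm_map, Nat.add_sub_cancel] at h3
    exact h3
  have hkey := taylor_key q (fderiv ℝ f) ((q.factorial : ℝ) * L) hc hlip' x s
  rw [← hS] at hkey
  refine le_trans hkey ?_
  have h7 : (((q + 1).factorial : ℝ)) = ((q : ℝ) + 1) * (q.factorial : ℝ) := by
    rw [Nat.factorial_succ]
    push_cast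
    ring
  have h6 : ((q.factorial : ℝ)) ≠ 0 := Nat.cast_ne_zero.2 q.factorial_ne_zero
  have heq : (q.factorial : ℝ) * L * ‖s‖ ^ (q + 1) / (((q + 1).factorial : ℝ))
      = L * ‖s‖ ^ (q + 1) / ((q : ℝ) + 1) := by
    rw [h7]
    field_simp
  rw [heq]
  exact div_le_self (by positivity) (by norm_num)
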